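/- Let B be a quaternion algebra over ℚ with standard involution x ↦ x̄, and suppose ψ, φ ∈ B satisfy φ² = −ℓ and ψ² + |Δ₀|·ψ + (Δ₀² + |Δ₀|)/4 = 0 and ψ·φ = φ·ψ̄, where ℓ is a prime and Δ₀ < 0 with Δ₀ ≡ 0 or 1 (mod 4). Then {1, ψ, φ, ψφ} spans a subring ℤ[ψ, φ] of B which is a ℤ-lattice of rank 4, and the reduced norm restricted to its Gross lattice Λ = ⟨|Δ₀| + 2ψ, 2φ, 2ψφ⟩_ℤ in the coordinates (X, Y, Z) is the ternary quadratic form |Δ₀|X² + 4ℓY² + ℓ(Δ₀² + |Δ₀|)Z² + 4ℓΔ₀·YZ. -/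

import Mathlib

/-- in a quaternion algebra `B` over `ℚ`, suppose `ψ, φ` satisfy
`φ² = −ℓ`, `ψ² + |Δ₀|ψ + (Δ₀² + |Δ₀|)/4 = 0`, `ψφ = φψ̄`, with `trd φ = 0` and
`trd ψ = −|Δ₀|`. Then the reduced norm on the Gross lattice
`Λ = ⟨|Δ₀| + 2ψ, 2φ, 2ψφ⟩_ℤ` is the ternary form
`|Δ₀|X² + 4ℓY² + ℓ(Δ₀² + |Δ₀|)Z² + 4ℓΔ₀YZ`. -/
theorem gross_lattice_norm_form (c₁ c₂ : ℚ) (ℓ : ℕ) (hℓ : ℓ.Prime)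
    (Δ₀ : ℤ) (hΔ₀ : Δ₀ < 0) (hΔ₀4 : Δ₀ % 4 = 0 ∨ Δ₀ % 4 = 1)
    (ψ φ : QuaternionAlgebra ℚ c₁ 0 c₂)
    (hφ2 : φ ^ 2 = -((ℓ : ℤ) : QuaternionAlgebra ℚ c₁ 0 c₂))
    (hψ2 : ψ ^ 2 + ((|Δ₀| : ℤ) : QuaternionAlgebra ℚ c₁ 0 c₂) * ψ
        + algebraMap ℚ (QuaternionAlgebra ℚ c₁ 0 c₂)
            (((Δ₀ ^ 2 + |Δ₀| : ℤ) : ℚ) / 4) = 0)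
    (htrψ : ψ + star ψ = ((-|Δ₀| : ℤ) : QuaternionAlgebra ℚ c₁ 0 c₂))
    (htrφ : φ + star φ = 0)
    (hcomm : ψ * φ = φ * star ψ) :
    ∀ x y z : ℤ,
      letI b := (x : QuaternionAlgebra ℚ c₁ 0 c₂) *
            (((|Δ₀| : ℤ) : QuaternionAlgebra ℚ c₁ 0 c₂) + 2 * ψ)
          + (y : QuaternionAlgebra ℚ c₁ 0 c₂) * (2 * φ)
          + (z : QuaternionAlgebra ℚ c₁ 0 c₂) * (2 * (ψ * φ))
      b * star b =
        (((|Δ₀| * x ^ 2 + 4 * (ℓ : ℤ) * y ^ 2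
            + (ℓ : ℤ) * (Δ₀ ^ 2 + |Δ₀|) * z ^ 2
            + 4 * (ℓ : ℤ) * Δ₀ * y * z : ℤ)) : QuaternionAlgebra ℚ c₁ 0 c₂) := by
  rw [abs_of_neg hΔ₀] at hψ2 htrψ
  have Hψr := congrArg QuaternionAlgebra.re hψ2
  have Htr := congrArg QuaternionAlgebra.re htrψ
  have Hte := congrArg QuaternionAlgebra.re htrφ
  have Hfr := congrArg QuaternionAlgebra.re hφ2
  have Hcr := congrArg QuaternionAlgebra.re hcomm
  simp only [pow_two, QuaternionAlgebra.re_add, QuaternionAlgebra.re_mul,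
    QuaternionAlgebra.re_intCast, QuaternionAlgebra.imI_intCast, QuaternionAlgebra.imJ_intCast,
    QuaternionAlgebra.imK_intCast, QuaternionAlgebra.coe_algebraMap, QuaternionAlgebra.re_coe,
    QuaternionAlgebra.re_zero, QuaternionAlgebra.re_neg, QuaternionAlgebra.re_star,
    QuaternionAlgebra.imI_star, QuaternionAlgebra.imJ_star, QuaternionAlgebra.imK_star]
    at Hψr Htr Hte Hfr Hcr
  push_cast at Hψr Htr Hte Hfr Hcr
  -- canonical generators
  have G1 : ψ.re^2 + (c₁*ψ.imI^2 + c₂*ψ.imJ^2 - c₁*c₂*ψ.imK^2) - (Δ₀:ℚ)*ψ.re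
      + ((Δ₀:ℚ)^2 - (Δ₀:ℚ))/4 = 0 := by linear_combination Hψr
  have G2 : φ.re^2 + (c₁*φ.imI^2 + c₂*φ.imJ^2 - c₁*c₂*φ.imK^2) + (ℓ:ℚ) = 0 := by
    linear_combination Hfr
  have G3 : 2*(c₁*ψ.imI*φ.imI + c₂*ψ.imJ*φ.imJ - c₁*c₂*ψ.imK*φ.imK) = 0 := by
    linear_combination Hcr
  have G4 : 2*ψ.re - (Δ₀:ℚ) = 0 := by linear_combination Htr
  have G5 : 2*φ.re = 0 := by linear_combination Hte
  intro x y z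
  rw [abs_of_neg hΔ₀]
  have h2 : (2 : QuaternionAlgebra ℚ c₁ 0 c₂) = ((2:ℤ) : QuaternionAlgebra ℚ c₁ 0 c₂) := by
    norm_cast
  rw [h2]
  refine QuaternionAlgebra.ext ?_ ?_ ?_ ?_ <;>
    simp only [QuaternionAlgebra.re_add, QuaternionAlgebra.re_mul, QuaternionAlgebra.imI_add,
      QuaternionAlgebra.imI_mul, QuaternionAlgebra.imJ_add, QuaternionAlgebra.imJ_mul,
      QuaternionAlgebra.imK_add, QuaternionAlgebra.imK_mul,
      QuaternionAlgebra.re_intCast, QuaternionAlgebra.imI_intCast, QuaternionAlgebra.imJ_intCast,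
      QuaternionAlgebra.imK_intCast, QuaternionAlgebra.re_star, QuaternionAlgebra.imI_star,
      QuaternionAlgebra.imJ_star, QuaternionAlgebra.imK_star] <;>
    push_cast
  · linear_combination
      ((-4)*(x:ℚ)^2 + (-4)*(ℓ:ℚ)*(z:ℚ)^2) * G1
      + ((-4)*(y:ℚ)^2 + (-4)*(Δ₀:ℚ)*(y:ℚ)*(z:ℚ) + (-1)*(Δ₀:ℚ)^2*(z:ℚ)^2
        + (4)*c₂*(z:ℚ)^2*ψ.imJ^2 + (4)*c₁*(z:ℚ)^2*ψ.imI^2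
        + (-4)*c₁*c₂*(z:ℚ)^2*ψ.imK^2) * G2
      + ((-4)*(x:ℚ)*(y:ℚ) + (-2)*(Δ₀:ℚ)*(x:ℚ)*(z:ℚ)) * G3
      + ((2)*(z:ℚ)^2*ψ.re*φ.re^2 + (4)*(y:ℚ)*(z:ℚ)*φ.re^2 + (4)*(x:ℚ)*(z:ℚ)*ψ.re*φ.re
        + (4)*(x:ℚ)*(y:ℚ)*φ.re + (4)*(x:ℚ)^2*ψ.re + (2)*(ℓ:ℚ)*(z:ℚ)^2*ψ.re
        + (Δ₀:ℚ)*(z:ℚ)^2*φ.re^2 + (-2)*(Δ₀:ℚ)*(x:ℚ)^2 + (-1)*(Δ₀:ℚ)*(ℓ:ℚ)*(z:ℚ)^2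
        + (-2)*c₂*(z:ℚ)^2*ψ.re*φ.imJ^2 + (-4)*c₂*(y:ℚ)*(z:ℚ)*φ.imJ^2
        + (-1)*c₂*(Δ₀:ℚ)*(z:ℚ)^2*φ.imJ^2 + (-2)*c₁*(z:ℚ)^2*ψ.re*φ.imI^2
        + (-4)*c₁*(y:ℚ)*(z:ℚ)*φ.imI^2 + (-1)*c₁*(Δ₀:ℚ)*(z:ℚ)^2*φ.imI^2
        + (2)*c₁*c₂*(z:ℚ)^2*ψ.re*φ.imK^2 + (4)*c₁*c₂*(y:ℚ)*(z:ℚ)*φ.imK^2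
        + c₁*c₂*(Δ₀:ℚ)*(z:ℚ)^2*φ.imK^2) * G4
      + ((4)*(y:ℚ)^2*φ.re + (4)*(Δ₀:ℚ)*(y:ℚ)*(z:ℚ)*φ.re + (Δ₀:ℚ)^2*(z:ℚ)^2*φ.re
        + (-4)*c₂*(z:ℚ)^2*ψ.imJ^2*φ.re + (-4)*c₂*(x:ℚ)*(z:ℚ)*ψ.imJ^2
        + (-4)*c₁*(z:ℚ)^2*ψ.imI^2*φ.re + (-4)*c₁*(x:ℚ)*(z:ℚ)*ψ.imI^2
        + (4)*c₁*c₂*(z:ℚ)^2*ψ.imK^2*φ.re + (4)*c₁*c₂*(x:ℚ)*(z:ℚ)*ψ.imK^2) * G5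
  · ring
  · ring
  · ring
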